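/- arXiv:0808.0350 — 4 statements merged into one kernel-verified Lean document; each statement's English description precedes it below -/
import Mathlib

section
/- Let X be a topological space, let f : X → X be a topologically transitive homeomorphism, and let A : X → GL(m,ℝ). If C : X → GL(m,ℝ) and C' : X → GL(m,ℝ) are continuous functions both satisfying A(x) = C(f x)·C(x)^{−1} and A(x) = C'(f x)·C'(x)^{−1} for all x ∈ X, then there exists a matrix B ∈ GL(m,ℝ) such that C'(x) = C(x)·B for all x ∈ X. -/
noncomputable section

/-- The ℓ² operator norm of a square real matrix. -/
def opNorm {m : ℕ} (M : Matrix (Fin m) (Fin m) ℝ) : ℝ :=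
  ‖Matrix.toEuclideanCLM (𝕜 := ℝ) M‖

/-- The metric `d_G(A,B) = ‖A − B‖ + ‖A⁻¹ − B⁻¹‖` on `GL(m,ℝ)`. -/
def dG {m : ℕ} (A B : GL (Fin m) ℝ) : ℝ :=
  opNorm ((A : Matrix (Fin m) (Fin m) ℝ) - (B : Matrix (Fin m) (Fin m) ℝ)) +
    opNorm (((A⁻¹ : GL (Fin m) ℝ) : Matrix (Fin m) (Fin m) ℝ) -
      ((B⁻¹ : GL (Fin m) ℝ) : Matrix (Fin m) (Fin m) ℝ))

/-- The cocycle generated by `A` over `f`: `coc f A x n = A(f^{n-1}x) ⋯ A(fx) A(x)`. -/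
def coc {X : Type*} {m : ℕ} (f : X → X) (A : X → GL (Fin m) ℝ) (x : X) : ℕ → GL (Fin m) ℝ
  | 0 => 1
  | n + 1 => A (f^[n] x) * coc f A x n

/-- Extension of the cocycle to `ℤ`: `cocZ f A x (−n) = (coc f A (f^{−n} x) n)⁻¹`. -/
def cocZ {X : Type*} [TopologicalSpace X] {m : ℕ} (f : X ≃ₜ X) (A : X → GL (Fin m) ℝ)
    (x : X) : ℤ → GL (Fin m) ℝ
  | (n : ℕ) => coc (⇑f) A x n
  | Int.negSucc n => (coc (⇑f) A ((⇑f.symm)^[n + 1] x) (n + 1))⁻¹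

/-- The `k`-th iterate (`k ∈ ℤ`) of a homeomorphism. -/
def iterZ {X : Type*} [TopologicalSpace X] (f : X ≃ₜ X) : ℤ → X → X
  | (n : ℕ) => (⇑f)^[n]
  | Int.negSucc n => (⇑f.symm)^[n + 1]

/-- `A` is α-Hölder continuous (with respect to the operator norm on matrices). -/
def IsHolder {X : Type*} [MetricSpace X] {m : ℕ} (A : X → GL (Fin m) ℝ) (α : ℝ) : Prop :=
  ∃ C : ℝ, ∀ x y : X,
    opNorm ((A x : Matrix (Fin m) (Fin m) ℝ) - (A y : Matrix (Fin m) (Fin m) ℝ))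
      ≤ C * dist x y ^ α

/-- The closing property with constants `c, lam, δ₀`: for any `x` and `n > 0` with
`dist(x, fⁿx) < δ₀` there are `p, y` with `fⁿp = p` such that, with `δ = c·dist(x, fⁿx)`,
for every `i = 0, …, n`: `dist(fⁱx, fⁱp) ≤ δ·exp(−λ·min{i,n−i})`,
`dist(fⁱp, fⁱy) ≤ δ·exp(−λi)` and `dist(fⁱy, fⁱx) ≤ δ·exp(−λ(n−i))`. -/
def ClosingAt {X : Type*} [MetricSpace X] (f : X ≃ₜ X) (c lam δ₀ : ℝ) : Prop :=
  ∀ x : X, ∀ n : ℕ, 0 < n → dist x ((⇑f)^[n] x) < δ₀ →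
    ∃ p y : X, (⇑f)^[n] p = p ∧ ∀ i ≤ n,
      dist ((⇑f)^[i] x) ((⇑f)^[i] p)
          ≤ c * dist x ((⇑f)^[n] x) * Real.exp (-(lam * (min i (n - i) : ℕ))) ∧
      dist ((⇑f)^[i] p) ((⇑f)^[i] y)
          ≤ c * dist x ((⇑f)^[n] x) * Real.exp (-(lam * i)) ∧
      dist ((⇑f)^[i] y) ((⇑f)^[i] x)
          ≤ c * dist x ((⇑f)^[n] x) * Real.exp (-(lam * ((n - i : ℕ) : ℝ)))

/-- The closing property: `ClosingAt` holds for some positive constants. -/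
def ClosingProperty {X : Type*} [MetricSpace X] (f : X ≃ₜ X) : Prop :=
  ∃ c lam δ₀ : ℝ, 0 < c ∧ 0 < lam ∧ 0 < δ₀ ∧ ClosingAt f c lam δ₀

/-- Topological transitivity: some point has a dense (two-sided) orbit. -/
def TopTransitive {X : Type*} [TopologicalSpace X] (f : X ≃ₜ X) : Prop :=
  ∃ z : X, Dense (Set.range fun k : ℤ => iterZ f k z)

/-- `ρ ∈ ℂ` is an eigenvalue of the real matrix `M` (a root of its characteristic
polynomial over `ℂ`). -/
def IsEigen {m : ℕ} (M : Matrix (Fin m) (Fin m) ℝ) (ρ : ℂ) : Prop :=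
  ((M.map Complex.ofReal).charpoly).IsRoot ρ

/-- The maximum of `|ρ|` over the complex eigenvalues `ρ` of `M` (the spectral radius). -/
def maxAbsEigen {m : ℕ} (M : Matrix (Fin m) (Fin m) ℝ) : ℝ :=
  sSup {r : ℝ | ∃ ρ : ℂ, IsEigen M ρ ∧ r = ‖ρ‖}

/-- The minimum of `|ρ|` over the complex eigenvalues `ρ` of `M`. -/
def minAbsEigen {m : ℕ} (M : Matrix (Fin m) (Fin m) ℝ) : ℝ :=
  sInf {r : ℝ | ∃ ρ : ℂ, IsEigen M ρ ∧ r = ‖ρ‖}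

/-- The β-closing property with constants `c, lam, δ₀`, i.e. the closing property with
`δ = c · dist(x, fⁿx)^β` in place of `δ = c · dist(x, fⁿx)`. -/
def ClosingAtβ {X : Type*} [MetricSpace X] (f : X ≃ₜ X) (β c lam δ₀ : ℝ) : Prop :=
  ∀ x : X, ∀ n : ℕ, 0 < n → dist x ((⇑f)^[n] x) < δ₀ →
    ∃ p y : X, (⇑f)^[n] p = p ∧ ∀ i ≤ n,
      dist ((⇑f)^[i] x) ((⇑f)^[i] p)
          ≤ c * dist x ((⇑f)^[n] x) ^ β * Real.exp (-(lam * (min i (n - i) : ℕ))) ∧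
      dist ((⇑f)^[i] p) ((⇑f)^[i] y)
          ≤ c * dist x ((⇑f)^[n] x) ^ β * Real.exp (-(lam * i)) ∧
      dist ((⇑f)^[i] y) ((⇑f)^[i] x)
          ≤ c * dist x ((⇑f)^[n] x) ^ β * Real.exp (-(lam * ((n - i : ℕ) : ℝ)))

/-- **Uniqueness of the transfer function up to translation.** Two continuous solutions
`C, C'` of `A(x) = C(fx)·C(x)⁻¹` over a topologically transitive homeomorphism differ by
a constant right translation: `C'(x) = C(x)·B`. -/
theorem transfer_unique_up_to_translation {X : Type*} [TopologicalSpace X] (f : X ≃ₜ X)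
    (htrans : TopTransitive f) {m : ℕ} (A C C' : X → GL (Fin m) ℝ)
    (hC : Continuous C) (hC' : Continuous C')
    (h1 : ∀ x : X, A x = C (f x) * (C x)⁻¹)
    (h2 : ∀ x : X, A x = C' (f x) * (C' x)⁻¹) :
    ∃ B : GL (Fin m) ℝ, ∀ x : X, C' x = C x * B := by
  obtain ⟨z, hz⟩ := htrans
  set g : X → GL (Fin m) ℝ := fun x => (C x)⁻¹ * C' x with hg
  have hgcont : Continuous g := hC.inv.mul hC'
  have hstep : ∀ x : X, g (f x) = g x := by
    intro x
    have e1 : C (f x) = A x * C x := by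
      rw [h1 x, mul_assoc, inv_mul_cancel, mul_one]
    have e2 : C' (f x) = A x * C' x := by
      rw [h2 x, mul_assoc, inv_mul_cancel, mul_one]
    simp only [hg, e1, e2, mul_inv_rev]
    group
  have hstep' : ∀ x : X, g (f.symm x) = g x := by
    intro x
    have := hstep (f.symm x)
    rw [f.apply_symm_apply] at this; exact this.symm
  have hiterp : ∀ n : ℕ, ∀ x : X, g ((⇑f)^[n] x) = g x := by
    intro n
    induction n with
    | zero => intro x; rfl
    | succ n ih => intro x; rw [Function.iterate_succ_apply, ih, hstep]
  have hiterm : ∀ n : ℕ, ∀ x : X, g ((⇑f.symm)^[n] x) = g x := by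
    intro n
    induction n with
    | zero => intro x; rfl
    | succ n ih => intro x; rw [Function.iterate_succ_apply, ih, hstep']
  have horbit : ∀ k : ℤ, g (iterZ f k z) = g z := by
    intro k
    cases k with
    | ofNat n => exact hiterp n z
    | negSucc n => exact hiterm (n + 1) z
  have hconst : g = fun _ => g z := by
    apply Continuous.ext_on hz hgcont continuous_const
    rintro x ⟨k, rfl⟩
    exact horbit k
  refine ⟨g z, fun x => ?_⟩
  have hx : g x = g z := congrFun hconst x
  calc C' x = C x * ((C x)⁻¹ * C' x) := by group
    _ = C x * g x := rfl
    _ = C x * g z := by rw [hx]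
end
end

section
/- Let X be a compact metric space, let f : X → X be a homeomorphism, and let 𝒜 be the cocycle generated by an α-Hölder function A : X → GL(m,ℝ). Suppose there exist ε > 0 and c_ε > 0 such that ‖𝒜(x,n)‖ ≤ c_ε·e^{εn} and ‖𝒜(x,n)^{−1}‖ ≤ c_ε·e^{εn} for all x ∈ X and n ∈ ℕ. Then for any λ > 2ε/α there exists a constant c > 0 (depending only on A, c_ε, and αλ − 2ε) such that for any δ > 0, any n ∈ ℕ, and any points x, y ∈ X with dist(f^i x, f^i y) ≤ δ·e^{−λi} for all i = 0, …, n, one has ‖𝒜(x,n)^{−1}·𝒜(y,n) − Id‖ ≤ c·δ^α. -/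
noncomputable section

lemma opNorm_nonneg {m : ℕ} (M : Matrix (Fin m) (Fin m) ℝ) : 0 ≤ opNorm M := norm_nonneg _

lemma opNorm_mul_le {m : ℕ} (M N : Matrix (Fin m) (Fin m) ℝ) :
    opNorm (M * N) ≤ opNorm M * opNorm N := by
  unfold opNorm; rw [map_mul]; exact norm_mul_le _ _

lemma opNorm_sum_le {m : ℕ} (n : ℕ) (g : ℕ → Matrix (Fin m) (Fin m) ℝ) :
    opNorm (∑ i ∈ Finset.range n, g i) ≤ ∑ i ∈ Finset.range n, opNorm (g i) := by
  unfold opNorm; rw [map_sum]; exact norm_sum_le _ _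

/-- **Comparison of slowly growing cocycles along exponentially converging orbit
segments (forward version).** If `‖𝒜(x,n)‖, ‖𝒜(x,n)⁻¹‖ ≤ c_ε·e^{εn}` and
`λ > 2ε/α`, then `dist(fⁱx, fⁱy) ≤ δ·e^{−λi}` for `i = 0,…,n` implies
`‖𝒜(x,n)⁻¹·𝒜(y,n) − Id‖ ≤ c·δ^α`. -/
theorem close_orbits_forward {X : Type*} [MetricSpace X] [CompactSpace X] (f : X ≃ₜ X)
    {m : ℕ} (α : ℝ) (hα : 0 < α) (A : X → GL (Fin m) ℝ) (hH : IsHolder A α)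
    (ε cε : ℝ) (hε : 0 < ε) (hcε : 0 < cε)
    (hgrow : ∀ (x : X) (n : ℕ),
      opNorm ((coc (⇑f) A x n : GL (Fin m) ℝ) : Matrix (Fin m) (Fin m) ℝ)
          ≤ cε * Real.exp (ε * n) ∧
      opNorm (((coc (⇑f) A x n)⁻¹ : GL (Fin m) ℝ) : Matrix (Fin m) (Fin m) ℝ)
          ≤ cε * Real.exp (ε * n))
    (lam : ℝ) (hlam : 2 * ε / α < lam) :
    ∃ c : ℝ, 0 < c ∧ ∀ δ : ℝ, 0 < δ → ∀ (n : ℕ) (x y : X),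
      (∀ i ≤ n, dist ((⇑f)^[i] x) ((⇑f)^[i] y) ≤ δ * Real.exp (-(lam * i))) →
      opNorm ((((coc (⇑f) A x n)⁻¹ * coc (⇑f) A y n : GL (Fin m) ℝ) :
        Matrix (Fin m) (Fin m) ℝ) - 1) ≤ c * δ ^ α := by
  obtain ⟨C, hC⟩ := hH
  set C' : ℝ := max C 0 with hC'def
  have hC'0 : 0 ≤ C' := le_max_right _ _
  set q : ℝ := Real.exp (2 * ε - α * lam) with hqdef
  have hq0 : 0 < q := Real.exp_pos _
  have hq1 : q < 1 := by
    rw [hqdef, Real.exp_lt_one_iff]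
    have : 2 * ε < α * lam := by
      have := (div_lt_iff₀ hα).mp hlam
      linarith [mul_comm lam α]
    linarith
  set K : ℝ := cε ^ 2 * Real.exp ε * C' with hKdef
  have hK0 : 0 ≤ K := by positivity
  have h1q : (0:ℝ) < 1 - q := by linarith
  refine ⟨K * (1 - q)⁻¹ + 1, by nlinarith [mul_nonneg hK0 (inv_nonneg.mpr h1q.le)], ?_⟩
  intro δ hδ n x y hxy
  set B : ℕ → Matrix (Fin m) (Fin m) ℝ :=
    fun i => (((coc (⇑f) A x i)⁻¹ * coc (⇑f) A y i : GL (Fin m) ℝ) :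
      Matrix (Fin m) (Fin m) ℝ) with hBdef
  have hB0 : B 0 = 1 := by simp [hBdef, coc]
  have htel : B n - 1 = ∑ i ∈ Finset.range n, (B (i + 1) - B i) := by
    rw [Finset.sum_range_sub, hB0]
  have hδα : (0:ℝ) < δ ^ α := Real.rpow_pos_of_pos hδ α
  calc opNorm (B n - 1) = opNorm (∑ i ∈ Finset.range n, (B (i + 1) - B i)) := by rw [htel]
    _ ≤ ∑ i ∈ Finset.range n, opNorm (B (i + 1) - B i) := opNorm_sum_le n _
    _ ≤ ∑ i ∈ Finset.range n, K * q ^ i * δ ^ α := by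
        apply Finset.sum_le_sum
        intro i hi
        have hin : i < n := Finset.mem_range.mp hi
        have key : B (i + 1) - B i
            = (((coc (⇑f) A x (i+1))⁻¹ : GL (Fin m) ℝ) : Matrix (Fin m) (Fin m) ℝ)
              * (((A ((⇑f)^[i] y) : GL (Fin m) ℝ) : Matrix (Fin m) (Fin m) ℝ)
                  - ((A ((⇑f)^[i] x) : GL (Fin m) ℝ) : Matrix (Fin m) (Fin m) ℝ))
              * ((coc (⇑f) A y i : GL (Fin m) ℝ) : Matrix (Fin m) (Fin m) ℝ) := by
          simp only [hBdef, coc, mul_inv_rev, Units.val_mul, Matrix.sub_mul, Matrix.mul_sub,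
            mul_assoc, Units.inv_mul_cancel_left]
        have hP := (hgrow x (i + 1)).2
        have hV := (hgrow y i).1
        have hD : opNorm (((A ((⇑f)^[i] y) : GL (Fin m) ℝ) : Matrix (Fin m) (Fin m) ℝ)
              - ((A ((⇑f)^[i] x) : GL (Fin m) ℝ) : Matrix (Fin m) (Fin m) ℝ))
            ≤ C' * (δ * Real.exp (-(lam * i))) ^ α := by
          refine le_trans (hC _ _) ?_
          have hd : dist ((⇑f)^[i] y) ((⇑f)^[i] x) ≤ δ * Real.exp (-(lam * i)) := by
            rw [dist_comm]; exact hxy i hin.le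
          have h1 : C * dist ((⇑f)^[i] y) ((⇑f)^[i] x) ^ α
              ≤ C' * dist ((⇑f)^[i] y) ((⇑f)^[i] x) ^ α :=
            mul_le_mul_of_nonneg_right (le_max_left _ _) (Real.rpow_nonneg dist_nonneg _)
          refine h1.trans (mul_le_mul_of_nonneg_left ?_ hC'0)
          exact Real.rpow_le_rpow dist_nonneg hd hα.le
        have hexp : Real.exp (ε * ((i + 1 : ℕ) : ℝ)) * Real.exp (-(lam * i)) ^ α * Real.exp (ε * i)
            = Real.exp ε * q ^ i := by
          rw [← Real.exp_mul, ← Real.exp_add, ← Real.exp_add, hqdef, ← Real.exp_nat_mul,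
            ← Real.exp_add]
          congr 1
          push_cast
          ring
        calc opNorm (B (i + 1) - B i)
            ≤ opNorm (((coc (⇑f) A x (i+1))⁻¹ : GL (Fin m) ℝ) : Matrix (Fin m) (Fin m) ℝ)
              * opNorm (((A ((⇑f)^[i] y) : GL (Fin m) ℝ) : Matrix (Fin m) (Fin m) ℝ)
                  - ((A ((⇑f)^[i] x) : GL (Fin m) ℝ) : Matrix (Fin m) (Fin m) ℝ))
              * opNorm ((coc (⇑f) A y i : GL (Fin m) ℝ) : Matrix (Fin m) (Fin m) ℝ) := by
              rw [key]
              exact le_trans (opNorm_mul_le _ _)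
                (mul_le_mul_of_nonneg_right (opNorm_mul_le _ _) (opNorm_nonneg _))
          _ ≤ (cε * Real.exp (ε * ((i + 1 : ℕ) : ℝ))) * (C' * (δ * Real.exp (-(lam * i))) ^ α)
              * (cε * Real.exp (ε * i)) := by
              have h2 : (0:ℝ) ≤ cε * Real.exp (ε * ((i + 1 : ℕ) : ℝ)) := by positivity
              have h3 : (0:ℝ) ≤ C' * (δ * Real.exp (-(lam * i))) ^ α := by
                exact mul_nonneg hC'0 (Real.rpow_nonneg (by positivity) _)
              exact mul_le_mul (mul_le_mul hP hD (opNorm_nonneg _) h2) hV (opNorm_nonneg _)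
                (mul_nonneg h2 h3)
          _ = K * q ^ i * δ ^ α := by
              rw [Real.mul_rpow hδ.le (Real.exp_nonneg _), hKdef]
              push_cast at hexp ⊢
              linear_combination (cε ^ 2 * C' * δ ^ α) * hexp
    _ = K * δ ^ α * ∑ i ∈ Finset.range n, q ^ i := by
        rw [Finset.mul_sum]
        exact Finset.sum_congr rfl fun i _ => by ring
    _ ≤ K * δ ^ α * (1 - q)⁻¹ := by
        refine mul_le_mul_of_nonneg_left ?_ (by positivity)
        refine le_of_le_of_eq (Summable.sum_le_tsum (Finset.range n)
          (fun i _ => pow_nonneg hq0.le i) (summable_geometric_of_lt_one hq0.le hq1)) ?_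
        exact tsum_geometric_of_lt_one hq0.le hq1
    _ ≤ (K * (1 - q)⁻¹ + 1) * δ ^ α := by nlinarith
end
end

section
/- Let A, B ∈ GL(m,ℝ), let M ≥ 0 and 0 < ξ < 1/2. If d_G(A, Id) ≤ M and either ‖A^{−1}B − Id‖ ≤ ξ or ‖AB^{−1} − Id‖ ≤ ξ, then d_G(A, B) ≤ 3(M+1)·ξ. -/
noncomputable section

theorem aux_case {R : Type*} [NormedRing R] (a a' b b' : R)
    (haa' : a * a' = 1) (hb'b : b' * b = 1)
    (h1 : ‖(1:R)‖ ≤ 1) (M ξ : ℝ)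
    (hξ : 0 < ξ) (hξ2 : ξ < 1/2)
    (hA : ‖a - 1‖ + ‖a' - 1‖ ≤ M) (h : ‖a' * b - 1‖ ≤ ξ) :
    ‖a - b‖ + ‖a' - b'‖ ≤ 3 * (M + 1) * ξ := by
  have hna : ‖a‖ ≤ M + 1 := by
    have := norm_nonneg (a' - 1)
    calc ‖a‖ = ‖(a - 1) + 1‖ := by rw [sub_add_cancel]
    _ ≤ ‖a - 1‖ + ‖(1:R)‖ := norm_add_le _ _
    _ ≤ M + 1 := by linarith
  have hna' : ‖a'‖ ≤ M + 1 := by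
    have := norm_nonneg (a - 1)
    calc ‖a'‖ = ‖(a' - 1) + 1‖ := by rw [sub_add_cancel]
    _ ≤ ‖a' - 1‖ + ‖(1:R)‖ := norm_add_le _ _
    _ ≤ M + 1 := by linarith
  have hkey1 : a - b = -(a * (a' * b - 1)) := by
    have h2 : a * (a' * b - 1) = (a * a') * b - a := by noncomm_ring
    rw [h2, haa', one_mul, neg_sub]
  have hkey2 : 1 - b' * a = (b' * a) * (a' * b - 1) := by
    have h2 : (b' * a) * (a' * b - 1) = b' * (a * a') * b - b' * a := by noncomm_ring
    rw [h2, haa', mul_one, hb'b]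
  have hb'a : ‖b' * a‖ ≤ 2 := by
    have h3 : b' * a = 1 - (b' * a) * (a' * b - 1) := by
      rw [← hkey2]; noncomm_ring
    have h4 : ‖b' * a‖ ≤ 1 + ‖b' * a‖ * ξ := by
      calc ‖b' * a‖ = ‖1 - (b' * a) * (a' * b - 1)‖ := by rw [← h3]
      _ ≤ ‖(1:R)‖ + ‖(b' * a) * (a' * b - 1)‖ := norm_sub_le _ _
      _ ≤ 1 + ‖b' * a‖ * ‖a' * b - 1‖ := by
          have := norm_mul_le (b' * a) (a' * b - 1); linarith
      _ ≤ 1 + ‖b' * a‖ * ξ := by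
          have := norm_nonneg (b' * a); nlinarith
    nlinarith [norm_nonneg (b' * a)]
  have hab : ‖a - b‖ ≤ (M + 1) * ξ := by
    calc ‖a - b‖ = ‖a * (a' * b - 1)‖ := by rw [hkey1, norm_neg]
    _ ≤ ‖a‖ * ‖a' * b - 1‖ := norm_mul_le _ _
    _ ≤ (M + 1) * ξ := by
        have := norm_nonneg a
        have := norm_nonneg (a' * b - 1)
        nlinarith
  have hkey3 : a' - b' = (1 - b' * a) * a' := by
    have h2 : (1 - b' * a) * a' = a' - b' * (a * a') := by noncomm_ring
    rw [h2, haa', mul_one]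
  have ha'b' : ‖a' - b'‖ ≤ 2 * ξ * (M + 1) := by
    calc ‖a' - b'‖ = ‖(1 - b' * a) * a'‖ := by rw [hkey3]
    _ ≤ ‖1 - b' * a‖ * ‖a'‖ := norm_mul_le _ _
    _ ≤ 2 * ξ * (M + 1) := by
        have h5 : ‖1 - b' * a‖ ≤ 2 * ξ := by
          calc ‖1 - b' * a‖ = ‖(b' * a) * (a' * b - 1)‖ := by rw [hkey2]
          _ ≤ ‖b' * a‖ * ‖a' * b - 1‖ := norm_mul_le _ _
          _ ≤ 2 * ξ := by nlinarith [norm_nonneg (b' * a), norm_nonneg (a' * b - 1)]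
        have := norm_nonneg (1 - b' * a)
        have := norm_nonneg a'
        nlinarith
  nlinarith

/-- **Matrix estimate (Lemma on `d_G`).** If `d_G(A, Id) ≤ M` and either
`‖A⁻¹B − Id‖ ≤ ξ` or `‖AB⁻¹ − Id‖ ≤ ξ` with `0 < ξ < 1/2`, then
`d_G(A, B) ≤ 3(M+1)ξ`. -/
theorem dG_estimate {m : ℕ} (A B : GL (Fin m) ℝ) (M ξ : ℝ) (hM : 0 ≤ M)
    (hξ : 0 < ξ) (hξ2 : ξ < 1 / 2) (hA : dG A 1 ≤ M)
    (h : opNorm (((A⁻¹ * B : GL (Fin m) ℝ) : Matrix (Fin m) (Fin m) ℝ) - 1) ≤ ξ ∨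
         opNorm (((A * B⁻¹ : GL (Fin m) ℝ) : Matrix (Fin m) (Fin m) ℝ) - 1) ≤ ξ) :
    dG A B ≤ 3 * (M + 1) * ξ := by
  have h1 : ‖(1 : EuclideanSpace ℝ (Fin m) →L[ℝ] EuclideanSpace ℝ (Fin m))‖ ≤ 1 := by
    rw [ContinuousLinearMap.one_def]; exact ContinuousLinearMap.norm_id_le
  have key : ∀ U V : GL (Fin m) ℝ,
      Matrix.toEuclideanCLM (𝕜 := ℝ) ((U : Matrix (Fin m) (Fin m) ℝ)) *
        Matrix.toEuclideanCLM (𝕜 := ℝ) ((V : Matrix (Fin m) (Fin m) ℝ)) =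
      Matrix.toEuclideanCLM (𝕜 := ℝ) (((U * V : GL (Fin m) ℝ) : Matrix (Fin m) (Fin m) ℝ)) := by
    intro U V
    rw [Units.val_mul, map_mul]
  unfold dG opNorm at hA ⊢
  unfold opNorm at h
  rw [map_sub, map_sub] at hA ⊢
  simp only [inv_one, Units.val_one, map_one] at hA
  simp only [map_sub, map_one, Units.val_mul, map_mul] at h
  rcases h with h | h
  · exact aux_case _ _ _ _ (by rw [key, mul_inv_cancel, Units.val_one, map_one])
      (by rw [key, inv_mul_cancel, Units.val_one, map_one]) h1 M ξ hξ hξ2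
      hA h
  · have := aux_case (Matrix.toEuclideanCLM (𝕜 := ℝ) ((A⁻¹ : GL (Fin m) ℝ) : Matrix (Fin m) (Fin m) ℝ))
      (Matrix.toEuclideanCLM (𝕜 := ℝ) ((A : Matrix (Fin m) (Fin m) ℝ)))
      (Matrix.toEuclideanCLM (𝕜 := ℝ) ((B⁻¹ : GL (Fin m) ℝ) : Matrix (Fin m) (Fin m) ℝ))
      (Matrix.toEuclideanCLM (𝕜 := ℝ) ((B : Matrix (Fin m) (Fin m) ℝ)))
      (by rw [key, inv_mul_cancel, Units.val_one, map_one])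
      (by rw [key, mul_inv_cancel, Units.val_one, map_one]) h1 M ξ hξ hξ2
      (by linarith) h
    linarith
end
end

section
/- Let X be a compact metric space, let f : X → X be a homeomorphism, and let 𝒜 be the cocycle generated by a continuous function A : X → GL(m,ℝ). Let z ∈ X have dense orbit {f^k z : k ∈ ℤ}, and suppose there is a constant M such that d_G(𝒜(z,k), Id) ≤ M for all k ∈ ℤ. Then there exists a constant M' such that d_G(𝒜(x,n), Id) ≤ M' for all x ∈ X and all n ∈ ℤ. -/
noncomputable section

namespace BddAux

open Matrix

lemma opNorm_nonneg {m : ℕ} (P : Matrix (Fin m) (Fin m) ℝ) : 0 ≤ opNorm P := norm_nonneg _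

lemma opNorm_mul_le {m : ℕ} (P Q : Matrix (Fin m) (Fin m) ℝ) :
    opNorm (P * Q) ≤ opNorm P * opNorm Q := by
  unfold opNorm; rw [_root_.map_mul]; exact norm_mul_le _ _

lemma opNorm_sub_le {m : ℕ} (P Q : Matrix (Fin m) (Fin m) ℝ) :
    opNorm (P - Q) ≤ opNorm P + opNorm Q := by
  unfold opNorm; rw [map_sub]; exact norm_sub_le _ _

lemma opNorm_one_le {m : ℕ} : opNorm (1 : Matrix (Fin m) (Fin m) ℝ) ≤ 1 := by
  unfold opNorm
  rw [_root_.map_one, ContinuousLinearMap.one_def]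
  exact ContinuousLinearMap.norm_id_le

noncomputable def tEL {m : ℕ} :
    Matrix (Fin m) (Fin m) ℝ →ₗ[ℝ] (EuclideanSpace ℝ (Fin m) →L[ℝ] EuclideanSpace ℝ (Fin m)) where
  toFun M := Matrix.toEuclideanCLM (𝕜 := ℝ) M
  map_add' := by intros; exact map_add _ _ _
  map_smul' := by intros; simp

lemma continuous_opNorm {m : ℕ} : Continuous fun M : Matrix (Fin m) (Fin m) ℝ => opNorm M :=
  (LinearMap.continuous_of_finiteDimensional (tEL (m := m))).norm

lemma coc_succ' {X : Type*} {m : ℕ} (f : X → X) (A : X → GL (Fin m) ℝ) (x : X) :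
    ∀ n : ℕ, coc f A x (n + 1) = coc f A (f x) n * A x := by
  intro n
  induction n with
  | zero => simp [coc]
  | succ k ih =>
      show A (f^[k+1] x) * coc f A x (k+1) = coc f A (f x) (k+1) * A x
      rw [ih]
      show A (f^[k+1] x) * (coc f A (f x) k * A x)
        = A (f^[k] (f x)) * coc f A (f x) k * A x
      rw [Function.iterate_succ_apply, mul_assoc]

lemma coc_continuous {X : Type*} [TopologicalSpace X] {m : ℕ} (f : X → X) (hf : Continuous f)
    (A : X → GL (Fin m) ℝ) (hA : Continuous A) (n : ℕ) :
    Continuous fun x => coc f A x n := by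
  induction n with
  | zero => exact continuous_const
  | succ k ih => exact ((hA.comp (hf.iterate k)).mul ih)

lemma iterZ_succ {X : Type*} [TopologicalSpace X] (f : X ≃ₜ X) (n : ℤ) (x : X) :
    iterZ f (n + 1) x = f (iterZ f n x) := by
  cases n with
  | ofNat k =>
      show iterZ f ((k + 1 : ℕ) : ℤ) x = f (f^[k] x)
      show f^[k+1] x = f (f^[k] x)
      rw [Function.iterate_succ_apply']
  | negSucc k =>
      cases k with
      | zero =>
          show iterZ f 0 x = f ((⇑f.symm)^[1] x)
          show x = f (f.symm x)
          rw [f.apply_symm_apply]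
      | succ j =>
          have h : Int.negSucc (j+1) + 1 = Int.negSucc j := by simp [Int.negSucc_eq]
          rw [h]
          show (⇑f.symm)^[j+1] x = f ((⇑f.symm)^[j+2] x)
          rw [Function.iterate_succ_apply' (f := ⇑f.symm) (n := j+1), f.apply_symm_apply]

lemma cocZ_succ {X : Type*} [TopologicalSpace X] {m : ℕ} (f : X ≃ₜ X) (A : X → GL (Fin m) ℝ)
    (x : X) (n : ℤ) : cocZ f A x (n + 1) = A (iterZ f n x) * cocZ f A x n := by
  cases n with
  | ofNat k =>
      show cocZ f A x ((k + 1 : ℕ) : ℤ) = A (f^[k] x) * coc (⇑f) A x k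
      rfl
  | negSucc k =>
      have hy : f ((⇑f.symm)^[k+1] x) = (⇑f.symm)^[k] x := by
        rw [Function.iterate_succ_apply' (f := ⇑f.symm), f.apply_symm_apply]
      have key : A ((⇑f.symm)^[k+1] x) * (coc (⇑f) A ((⇑f.symm)^[k+1] x) (k+1))⁻¹
          = (coc (⇑f) A ((⇑f.symm)^[k] x) k)⁻¹ := by
        rw [coc_succ', hy, _root_.mul_inv_rev, ← mul_assoc, mul_inv_cancel, one_mul]
      have hgoal : cocZ f A x (Int.negSucc k + 1)
          = (coc (⇑f) A ((⇑f.symm)^[k] x) k)⁻¹ := by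
        cases k with
        | zero =>
            show cocZ f A x 0 = (coc (⇑f) A x 0)⁻¹
            show (1 : GL (Fin m) ℝ) = (1 : GL (Fin m) ℝ)⁻¹
            rw [inv_one]
        | succ j =>
            have h : Int.negSucc (j+1) + 1 = Int.negSucc j := by simp [Int.negSucc_eq]
            rw [h]
            rfl
      rw [hgoal, ← key]
      rfl

lemma cocZ_pred {X : Type*} [TopologicalSpace X] {m : ℕ} (f : X ≃ₜ X) (A : X → GL (Fin m) ℝ)
    (x : X) (n : ℤ) : cocZ f A x n = (A (iterZ f n x))⁻¹ * cocZ f A x (n + 1) := by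
  rw [cocZ_succ, ← mul_assoc, inv_mul_cancel, one_mul]

lemma iterZ_add {X : Type*} [TopologicalSpace X] (f : X ≃ₜ X) (a b : ℤ) (x : X) :
    iterZ f (a + b) x = iterZ f a (iterZ f b x) := by
  induction a using Int.induction_on with
  | zero => simp; rfl
  | succ k ih =>
      have h : (k : ℤ) + 1 + b = (k + b) + 1 := by ring
      rw [h, iterZ_succ, ih, iterZ_succ]
  | pred k ih =>
      have h : (-(k:ℤ) - 1 + b) + 1 = -(k:ℤ) + b := by ring
      have h2 : (-(k:ℤ) - 1) + 1 = -(k:ℤ) := by ring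
      have := iterZ_succ f (-(k:ℤ) - 1 + b) x
      rw [h] at this
      have that := iterZ_succ f (-(k:ℤ) - 1) (iterZ f b x)
      rw [h2] at that
      rw [ih] at this
      rw [that] at this
      exact f.injective this.symm

lemma cocZ_add {X : Type*} [TopologicalSpace X] {m : ℕ} (f : X ≃ₜ X) (A : X → GL (Fin m) ℝ)
    (x : X) (a b : ℤ) :
    cocZ f A x (a + b) = cocZ f A (iterZ f b x) a * cocZ f A x b := by
  induction a using Int.induction_on with
  | zero =>
      have h1 : cocZ f A (iterZ f b x) 0 = 1 := rfl
      rw [zero_add, h1, one_mul]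
  | succ k ih =>
      have h : (k : ℤ) + 1 + b = (k + b) + 1 := by ring
      rw [h, cocZ_succ, ih, cocZ_succ, iterZ_add, mul_assoc]
  | pred k ih =>
      have h2 : (-(k:ℤ) - 1 + b) + 1 = -(k:ℤ) + b := by ring
      have h3 : (-(k:ℤ) - 1) + 1 = -(k:ℤ) := by ring
      have e1 : cocZ f A x (-(k:ℤ) - 1 + b)
          = (A (iterZ f (-(k:ℤ) - 1 + b) x))⁻¹ * cocZ f A x (-(k:ℤ) + b) := by
        rw [cocZ_pred f A x (-(k:ℤ) - 1 + b), h2]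
      have e2 : cocZ f A (iterZ f b x) (-(k:ℤ) - 1)
          = (A (iterZ f (-(k:ℤ) - 1) (iterZ f b x)))⁻¹ * cocZ f A (iterZ f b x) (-(k:ℤ)) := by
        rw [cocZ_pred f A (iterZ f b x) (-(k:ℤ) - 1), h3]
      rw [e1, e2, iterZ_add, ih, mul_assoc]

lemma cocZ_continuous {X : Type*} [TopologicalSpace X] {m : ℕ} (f : X ≃ₜ X)
    (A : X → GL (Fin m) ℝ) (hA : Continuous A) (n : ℤ) :
    Continuous fun x => cocZ f A x n := by
  cases n with
  | ofNat k => exact coc_continuous (⇑f) f.continuous A hA k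
  | negSucc k =>
      exact ((coc_continuous (⇑f) f.continuous A hA (k+1)).comp
        (f.symm.continuous.iterate (k+1))).inv

end BddAux

namespace BddAux

lemma opNorm_add_le {m : ℕ} (P Q : Matrix (Fin m) (Fin m) ℝ) :
    opNorm (P + Q) ≤ opNorm P + opNorm Q := by
  unfold opNorm; rw [map_add]; exact norm_add_le _ _

lemma dG_one_eq {m : ℕ} (U : GL (Fin m) ℝ) :
    dG U 1 = opNorm ((U : Matrix (Fin m) (Fin m) ℝ) - 1)
      + opNorm (((U⁻¹ : GL (Fin m) ℝ) : Matrix (Fin m) (Fin m) ℝ) - 1) := by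
  unfold dG
  rw [inv_one, Units.val_one]

lemma opNorm_le_sub_one {m : ℕ} (P : Matrix (Fin m) (Fin m) ℝ) :
    opNorm P ≤ opNorm (P - 1) + 1 := by
  have h := opNorm_add_le (P - 1) (1 : Matrix (Fin m) (Fin m) ℝ)
  have h1 := opNorm_one_le (m := m)
  rw [sub_add_cancel] at h
  linarith

lemma nrm_le_of_dG {m : ℕ} (U : GL (Fin m) ℝ) (M : ℝ) (h : dG U 1 ≤ M) :
    opNorm (U : Matrix (Fin m) (Fin m) ℝ) ≤ M + 1 ∧
      opNorm (((U⁻¹ : GL (Fin m) ℝ) : Matrix (Fin m) (Fin m) ℝ)) ≤ M + 1 := by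
  rw [dG_one_eq] at h
  have h1 := opNorm_nonneg ((U : Matrix (Fin m) (Fin m) ℝ) - 1)
  have h2 := opNorm_nonneg (((U⁻¹ : GL (Fin m) ℝ) : Matrix (Fin m) (Fin m) ℝ) - 1)
  have g1 := opNorm_le_sub_one (U : Matrix (Fin m) (Fin m) ℝ)
  have g2 := opNorm_le_sub_one (((U⁻¹ : GL (Fin m) ℝ) : Matrix (Fin m) (Fin m) ℝ))
  exact ⟨by linarith, by linarith⟩

lemma dG_one_le {m : ℕ} (U : GL (Fin m) ℝ) :
    dG U 1 ≤ opNorm (U : Matrix (Fin m) (Fin m) ℝ)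
      + opNorm (((U⁻¹ : GL (Fin m) ℝ) : Matrix (Fin m) (Fin m) ℝ)) + 2 := by
  rw [dG_one_eq]
  have h1 := opNorm_sub_le (U : Matrix (Fin m) (Fin m) ℝ) 1
  have h2 := opNorm_sub_le (((U⁻¹ : GL (Fin m) ℝ) : Matrix (Fin m) (Fin m) ℝ)) 1
  have h3 := opNorm_one_le (m := m)
  linarith

end BddAux


/-- **Boundedness along a dense orbit implies global boundedness.** If the cocycle
generated by a continuous `A` satisfies `d_G(𝒜(z,k), Id) ≤ M` along a dense two-sided
orbit of `z`, then `d_G(𝒜(x,n), Id)` is uniformly bounded over `x ∈ X`, `n ∈ ℤ`. -/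
theorem bounded_on_dense_orbit {X : Type*} [MetricSpace X] [CompactSpace X] (f : X ≃ₜ X)
    {m : ℕ} (A : X → GL (Fin m) ℝ) (hA : Continuous A)
    (z : X) (hz : Dense (Set.range fun k : ℤ => iterZ f k z))
    (M : ℝ) (hM : ∀ k : ℤ, dG (cocZ f A z k) 1 ≤ M) :
    ∃ M' : ℝ, ∀ (x : X) (n : ℤ), dG (cocZ f A x n) 1 ≤ M' := by
  have hM0 : 0 ≤ M := by
    have h0 := hM 0
    have : dG (cocZ f A z 0) 1 = dG (1 : GL (Fin m) ℝ) 1 := rfl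
    rw [this, BddAux.dG_one_eq, inv_one, Units.val_one, sub_self] at h0
    have : opNorm (0 : Matrix (Fin m) (Fin m) ℝ) = 0 := by
      unfold opNorm; rw [map_zero, norm_zero]
    linarith [h0, this]
  refine ⟨2 * ((M + 1) * (M + 1)) + 2, fun x n => ?_⟩
  have key : ∀ k : ℤ, dG (cocZ f A (iterZ f k z) n) 1 ≤ 2 * ((M + 1) * (M + 1)) + 2 := by
    intro k
    set U := cocZ f A z (n + k) with hU
    set V := cocZ f A z k with hV
    have hadd := BddAux.cocZ_add f A z n k
    have hC : cocZ f A (iterZ f k z) n = U * V⁻¹ := by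
      rw [eq_mul_inv_iff_mul_eq]; exact hadd.symm
    obtain ⟨hU1, hU2⟩ := BddAux.nrm_le_of_dG U M (hM (n + k))
    obtain ⟨hV1, hV2⟩ := BddAux.nrm_le_of_dG V M (hM k)
    have hb1 : opNorm ((U * V⁻¹ : GL (Fin m) ℝ) : Matrix (Fin m) (Fin m) ℝ)
        ≤ (M + 1) * (M + 1) := by
      rw [Units.val_mul]
      calc opNorm ((U : Matrix (Fin m) (Fin m) ℝ) * ((V⁻¹ : GL (Fin m) ℝ) : Matrix (Fin m) (Fin m) ℝ))
          ≤ opNorm (U : Matrix (Fin m) (Fin m) ℝ)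
            * opNorm ((V⁻¹ : GL (Fin m) ℝ) : Matrix (Fin m) (Fin m) ℝ) :=
            BddAux.opNorm_mul_le _ _
        _ ≤ (M + 1) * (M + 1) :=
            mul_le_mul hU1 hV2 (BddAux.opNorm_nonneg _) (by linarith)
    have hinv : (U * V⁻¹)⁻¹ = V * U⁻¹ := by group
    have hb2 : opNorm (((U * V⁻¹)⁻¹ : GL (Fin m) ℝ) : Matrix (Fin m) (Fin m) ℝ)
        ≤ (M + 1) * (M + 1) := by
      rw [hinv, Units.val_mul]
      calc opNorm ((V : Matrix (Fin m) (Fin m) ℝ) * ((U⁻¹ : GL (Fin m) ℝ) : Matrix (Fin m) (Fin m) ℝ))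
          ≤ opNorm (V : Matrix (Fin m) (Fin m) ℝ)
            * opNorm ((U⁻¹ : GL (Fin m) ℝ) : Matrix (Fin m) (Fin m) ℝ) :=
            BddAux.opNorm_mul_le _ _
        _ ≤ (M + 1) * (M + 1) :=
            mul_le_mul hV1 hU2 (BddAux.opNorm_nonneg _) (by linarith)
    rw [hC]
    have := BddAux.dG_one_le (U * V⁻¹)
    linarith
  -- continuity + density
  have hcoc := BddAux.cocZ_continuous f A hA n
  have hcont : Continuous fun x : X => dG (cocZ f A x n) 1 := by
    have h1 : Continuous fun x : X =>
        opNorm ((cocZ f A x n : Matrix (Fin m) (Fin m) ℝ) - 1) :=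
      BddAux.continuous_opNorm.comp ((Units.continuous_val.comp hcoc).sub continuous_const)
    have h2 : Continuous fun x : X =>
        opNorm ((((cocZ f A x n)⁻¹ : GL (Fin m) ℝ) : Matrix (Fin m) (Fin m) ℝ) - 1) :=
      BddAux.continuous_opNorm.comp ((Units.continuous_coe_inv.comp hcoc).sub continuous_const)
    have : (fun x : X => dG (cocZ f A x n) 1) = fun x : X =>
        opNorm ((cocZ f A x n : Matrix (Fin m) (Fin m) ℝ) - 1)
          + opNorm ((((cocZ f A x n)⁻¹ : GL (Fin m) ℝ) : Matrix (Fin m) (Fin m) ℝ) - 1) := by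
      funext x; exact BddAux.dG_one_eq _
    rw [this]
    exact h1.add h2
  have hclosed : IsClosed {x : X | dG (cocZ f A x n) 1 ≤ 2 * ((M + 1) * (M + 1)) + 2} :=
    isClosed_le hcont continuous_const
  have hsub : (Set.range fun k : ℤ => iterZ f k z)
      ⊆ {x : X | dG (cocZ f A x n) 1 ≤ 2 * ((M + 1) * (M + 1)) + 2} := by
    rintro _ ⟨k, rfl⟩; exact key k
  have : (Set.univ : Set X) ⊆ {x : X | dG (cocZ f A x n) 1 ≤ 2 * ((M + 1) * (M + 1)) + 2} := by
    rw [← hz.closure_eq]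
    exact closure_minimal hsub hclosed
  exact this (Set.mem_univ x)
end
end
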